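/- arXiv:1407.5029 — 3 statements merged into one kernel-verified Lean document; each statement's English description precedes it below -/
import Mathlib

section
/- Under the hypotheses of the preceding quantitative LLC lemma (Ω a Jordan domain whose level sets γ_ε, 0 ≤ ε ≤ ε₀, are Jordan curves satisfying the 2-point condition with a common constant C, and φ ∈ F is L-Lipschitz on [ε₀/3,∞) with φ(t) > Mt on [0, diam ∂Ω]), there exists λ > 1 depending only on C, L, M, ε₀ and diam Ω such that any two points y₁, y₂ ∈ Σ(Ω,φ) can be joined by a curve σ ⊂ Σ(Ω,φ) with diam σ ≤ λ|y₁ − y₂| (that is, Σ(Ω,φ) is of bounded turning). -/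
open Metric Set MeasureTheory

noncomputable section

/-- The Euclidean plane. -/
abbrev E2 : Type := EuclideanSpace ℝ (Fin 2)
/-- Euclidean three-space. -/
abbrev E3 : Type := EuclideanSpace ℝ (Fin 3)

/-- Build a point of ℝ³ from a planar point and a height. -/
def mk3 (x : E2) (z : ℝ) : E3 := (WithLp.equiv 2 (Fin 3 → ℝ)).symm ![x 0, x 1, z]

/-- A Jordan curve: the image of the unit circle under a continuous injection
(equivalently, a topological embedding, by compactness of the circle). -/
def IsJordanCurve (Γ : Set E2) : Prop :=
  ∃ f : E2 → E2, ContinuousOn f (sphere 0 1) ∧ InjOn f (sphere 0 1) ∧ f '' (sphere 0 1) = Γ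

/-- A Jordan domain: a bounded domain whose boundary is a Jordan curve. -/
def IsJordanDomain (Ω : Set E2) : Prop :=
  IsOpen Ω ∧ IsConnected Ω ∧ Bornology.IsBounded Ω ∧ IsJordanCurve (frontier Ω)

/-- The ε-level set γ_ε = {x ∈ Ω : dist(x,∂Ω) = ε}, with the convention γ₀ = ∂Ω. -/
def levelSet (Ω : Set E2) (ε : ℝ) : Set E2 :=
  if ε = 0 then frontier Ω else {x ∈ Ω | infDist x (frontier Ω) = ε}

/-- The double-dome-like surface Σ(Ω,φ). -/
def domeSurface (Ω : Set E2) (φ : ℝ → ℝ) : Set E3 :=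
  {p | ∃ x ∈ closure Ω, p = mk3 x (φ (infDist x (frontier Ω))) ∨
                        p = mk3 x (-φ (infDist x (frontier Ω)))}

/-- The class 𝓕 of gauges: homeomorphisms φ of [0,∞) onto [0,∞) with φ(0)=0,
liminf_{t→0} φ(t)/t > 0, and φ Lipschitz on [r,∞) for every r > 0. -/
structure GaugeF (φ : ℝ → ℝ) : Prop where
  continuousOn : ContinuousOn φ (Ici 0)
  strictMonoOn : StrictMonoOn φ (Ici 0)
  surjOn : SurjOn φ (Ici 0) (Ici 0)
  map_zero : φ 0 = 0
  liminf_pos : ∃ m > (0:ℝ), ∀ᶠ t in nhdsWithin 0 (Ioi 0), m * t ≤ φ t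
  lipschitzOn : ∀ r > (0:ℝ), ∃ L : NNReal, LipschitzOnWith L φ (Ici r)

/-- A subarc of Γ with endpoints x and y: a subset of Γ that is a simple arc from x to y. -/
def IsSubarc (Γ A : Set E2) (x y : E2) : Prop :=
  A ⊆ Γ ∧ ∃ f : ℝ → E2, ContinuousOn f (Icc 0 1) ∧ InjOn f (Icc 0 1) ∧
    f 0 = x ∧ f 1 = y ∧ f '' (Icc 0 1) = A

/-- The 2-point condition with constant C: for any two points of Γ, some subarc joining
them (hence the one of smaller diameter) has diameter at most C·|x−y|. -/
def TwoPointCondition (Γ : Set E2) (C : ℝ) : Prop :=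
  ∀ x ∈ Γ, ∀ y ∈ Γ, x ≠ y →
    ∃ A, IsSubarc Γ A x y ∧ Metric.diam A ≤ C * dist x y

/-- A c-chord-arc curve: a rectifiable Jordan curve such that for any two points, the
shorter subarc joining them has length (1-dimensional Hausdorff measure) at most c·|x−y|. -/
def IsChordArc (Γ : Set E2) (c : ℝ) : Prop :=
  IsJordanCurve Γ ∧ μH[1] Γ < ⊤ ∧
  ∀ x ∈ Γ, ∀ y ∈ Γ, x ≠ y →
    ∃ A, IsSubarc Γ A x y ∧ μH[1] A ≤ ENNReal.ofReal (c * dist x y)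

/-- The λ-LLC₁ condition. -/
def LLC1With {X : Type*} [MetricSpace X] (S : Set X) (lam : ℝ) : Prop :=
  ∀ x ∈ S, ∀ r > (0:ℝ), ∀ y₁ ∈ ball x r ∩ S, ∀ y₂ ∈ ball x r ∩ S,
    ∃ E ⊆ ball x (lam * r) ∩ S, IsCompact E ∧ IsConnected E ∧ y₁ ∈ E ∧ y₂ ∈ E

/-- The λ-LLC₂ condition. -/
def LLC2With {X : Type*} [MetricSpace X] (S : Set X) (lam : ℝ) : Prop :=
  ∀ x ∈ S, ∀ r > (0:ℝ), ∀ y₁ ∈ S \ ball x r, ∀ y₂ ∈ S \ ball x r,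
    ∃ E ⊆ S \ ball x (r / lam), IsCompact E ∧ IsConnected E ∧ y₁ ∈ E ∧ y₂ ∈ E

/-- λ-linear local connectivity. -/
def LLCWith {X : Type*} [MetricSpace X] (S : Set X) (lam : ℝ) : Prop :=
  LLC1With S lam ∧ LLC2With S lam

/-- S (with the Euclidean metric of ℝ³) is quasisymmetric to the unit sphere S²:
there are a homeomorphism η of [0,∞) onto itself and an η-quasisymmetric
homeomorphism of S onto the unit sphere. -/
def QSEquivSphere (S : Set E3) : Prop :=
  ∃ η : ℝ → ℝ, (ContinuousOn η (Ici 0) ∧ StrictMonoOn η (Ici 0) ∧ SurjOn η (Ici 0) (Ici 0)) ∧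
  ∃ f : S → (sphere (0:E3) 1 : Set E3), Function.Bijective f ∧
    ∀ (x a b : S) (t : ℝ), 0 < t → dist (x:E3) a ≤ t * dist (x:E3) b →
      dist (f x : E3) (f a) ≤ η t * dist (f x : E3) (f b)

/-- The level chord-arc property. -/
def LevelChordArc (Ω : Set E2) : Prop :=
  ∃ ε₀ > (0:ℝ), ∃ c > (1:ℝ), ∀ ε, 0 ≤ ε → ε ≤ ε₀ → IsChordArc (levelSet Ω ε) c

/-- The level quasicircle property. -/
def LevelQuasicircle (Ω : Set E2) : Prop :=
  ∃ ε₀ > (0:ℝ), ∃ C > (1:ℝ), ∀ ε, 0 ≤ ε → ε ≤ ε₀ →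
    IsJordanCurve (levelSet Ω ε) ∧ TwoPointCondition (levelSet Ω ε) C

lemma mk3_apply (x : E2) (z : ℝ) (i : Fin 3) : mk3 x z i = ![x 0, x 1, z] i := rfl

lemma dist_mk3 (a b : E2) (u v : ℝ) :
    dist (mk3 a u) (mk3 b v) = Real.sqrt ((dist (a 0) (b 0))^2 + (dist (a 1) (b 1))^2 + (dist u v)^2) := by
  rw [EuclideanSpace.dist_eq]
  congr 1
  rw [Fin.sum_univ_three]
  simp [mk3_apply]

lemma dist_E2 (a b : E2) : dist a b = Real.sqrt ((dist (a 0) (b 0))^2 + (dist (a 1) (b 1))^2) := by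
  rw [EuclideanSpace.dist_eq, Fin.sum_univ_two]

lemma dist_mk3_le (a b : E2) (u v : ℝ) :
    dist (mk3 a u) (mk3 b v) ≤ dist a b + |u - v| := by
  rw [dist_mk3, dist_E2, ← Real.dist_eq]
  set P := (dist (a 0) (b 0))^2 + (dist (a 1) (b 1))^2 with hP
  have hP0 : 0 ≤ P := by positivity
  have h1 : P + dist u v ^ 2 ≤ (Real.sqrt P + dist u v)^2 := by
    have := Real.sq_sqrt hP0
    nlinarith [Real.sqrt_nonneg P, dist_nonneg (x := u) (y := v)]
  calc Real.sqrt (P + dist u v ^ 2) ≤ Real.sqrt ((Real.sqrt P + dist u v)^2) := Real.sqrt_le_sqrt h1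
    _ = Real.sqrt P + dist u v := Real.sqrt_sq (by positivity)

lemma planar_le_dist_mk3 (a b : E2) (u v : ℝ) : dist a b ≤ dist (mk3 a u) (mk3 b v) := by
  rw [dist_mk3, dist_E2]
  apply Real.sqrt_le_sqrt; nlinarith [dist_nonneg (x := u) (y := v)]

lemma vert_le_dist_mk3 (a b : E2) (u v : ℝ) : |u - v| ≤ dist (mk3 a u) (mk3 b v) := by
  rw [dist_mk3, ← Real.dist_eq]
  calc dist u v = Real.sqrt ((dist u v)^2) := (Real.sqrt_sq dist_nonneg).symm
    _ ≤ _ := Real.sqrt_le_sqrt (le_add_of_nonneg_left (by positivity))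

lemma Continuous.mk3' {α : Type*} [TopologicalSpace α] {f : α → E2} {g : α → ℝ}
    (hf : Continuous f) (hg : Continuous g) : Continuous fun t => mk3 (f t) (g t) := by
  apply Continuous.comp (PiLp.continuous_toLp 2 (fun _ : Fin 3 => ℝ))
  refine continuous_pi fun i => ?_
  fin_cases i
  · simpa [Function.comp_def] using (continuous_apply (0 : Fin 2)).comp (by exact (PiLp.continuous_ofLp 2 _).comp hf)
  · simpa [Function.comp_def] using (continuous_apply (1 : Fin 2)).comp (by exact (PiLp.continuous_ofLp 2 _).comp hf)
  · simpa using hg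

lemma preconn_frontier {α : Type*} [TopologicalSpace α] {s t : Set α} (hs : IsPreconnected s)
    (h1 : (s ∩ t).Nonempty) (h2 : (s \ t).Nonempty) : (s ∩ frontier t).Nonempty := by
  by_contra h
  rw [not_nonempty_iff_eq_empty] at h
  have hsub : s ⊆ interior t ∪ (closure t)ᶜ := by
    intro x hx
    by_contra hx'
    simp only [mem_union, not_or, mem_compl_iff, not_not] at hx'
    have : x ∈ s ∩ frontier t := ⟨hx, hx'.2, hx'.1⟩
    rw [h] at this; exact this
  obtain ⟨x1, hx1s, hx1t⟩ := h1
  obtain ⟨x2, hx2s, hx2t⟩ := h2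
  have h1' : (s ∩ interior t).Nonempty := by
    refine ⟨x1, hx1s, ?_⟩
    rcases hsub hx1s with h' | h'
    · exact h'
    · exact absurd (subset_closure hx1t) h'
  have h2' : (s ∩ (closure t)ᶜ).Nonempty := by
    refine ⟨x2, hx2s, ?_⟩
    rcases hsub hx2s with h' | h'
    · exact absurd (interior_subset h') hx2t
    · exact h'
  obtain ⟨z, _, hz1, hz2⟩ := hs (interior t) (closure t)ᶜ isOpen_interior
    isClosed_closure.isOpen_compl hsub h1' h2'
  exact hz2 (subset_closure (interior_subset hz1))

variable {Ω : Set E2}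

/-- points of a segment from x into the domain stay in the closure as long as they keep
positive distance to the frontier -/
lemma seg_mem_closure (hx : x ∈ closure Ω) (z : E2)
    (hpos : ∀ t : ℝ, t ∈ Icc (0:ℝ) 1 → 0 < infDist (x + t • (z - x)) (frontier Ω)) :
    ∀ t : ℝ, t ∈ Icc (0:ℝ) 1 → x + t • (z - x) ∈ closure Ω := by
  intro t ht
  by_contra hmem
  set p : ℝ → E2 := fun u => x + u • (z - x) with hp
  have hK : IsPreconnected (p '' Icc 0 1) := by
    apply IsPreconnected.image isPreconnected_Icc
    apply Continuous.continuousOn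
    exact continuous_const.add ((continuous_id.smul continuous_const))
  have h1 : ((p '' Icc 0 1) ∩ closure Ω).Nonempty :=
    ⟨x, ⟨0, ⟨le_refl 0, zero_le_one⟩, by simp [hp]⟩, hx⟩
  have h2 : ((p '' Icc 0 1) \ closure Ω).Nonempty := ⟨p t, ⟨t, ht, rfl⟩, hmem⟩
  obtain ⟨y, ⟨u, hu, hyu⟩, hyf⟩ := preconn_frontier hK h1 h2
  have : y ∈ frontier Ω := frontier_closure_subset hyf
  have h0 : infDist y (frontier Ω) = 0 := infDist_zero_of_mem this
  have := hpos u hu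
  change 0 < infDist (p u) (frontier Ω) at this
  rw [hyu, h0] at this
  exact lt_irrefl _ this

lemma seg_infDist {x w : E2} {d : ℝ} (hw : w ∈ frontier Ω)
    (hd : infDist x (frontier Ω) = d) (hdw : dist x w = d) :
    ∀ t : ℝ, t ∈ Icc (0:ℝ) 1 → infDist (x + t • (w - x)) (frontier Ω) = (1 - t) * d := by
  intro t ht
  have hd0 : 0 ≤ d := hd ▸ infDist_nonneg
  have hup : infDist (x + t • (w - x)) (frontier Ω) ≤ (1 - t) * d := by
    have : dist (x + t • (w - x)) w = (1 - t) * d := by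
      rw [dist_eq_norm]
      have : x + t • (w - x) - w = (1 - t) • (x - w) := by module
      rw [this, norm_smul, Real.norm_eq_abs, abs_of_nonneg (by linarith [ht.2]),
        ← dist_eq_norm]
      first | rw [hdw] | rw [dist_comm w x, hdw]
    calc infDist (x + t • (w - x)) (frontier Ω) ≤ dist (x + t • (w - x)) w :=
          infDist_le_dist_of_mem hw
      _ = (1 - t) * d := this
  have hlow : (1 - t) * d ≤ infDist (x + t • (w - x)) (frontier Ω) := by
    have h1 : dist x (x + t • (w - x)) = t * d := by
      rw [dist_eq_norm]
      have : x - (x + t • (w - x)) = (-t) • (w - x) := by module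
      rw [this, norm_smul, Real.norm_eq_abs, abs_neg, abs_of_nonneg ht.1, ← dist_eq_norm,
        dist_comm w x]
      first | rw [hdw] | rw [dist_comm w x, hdw]
    have h2 : infDist x (frontier Ω) ≤ infDist (x + t • (w - x)) (frontier Ω) + dist x (x + t • (w - x)) :=
      infDist_le_infDist_add_dist
    rw [hd, h1] at h2
    linarith
  linarith

lemma seg_closure (hx : x ∈ closure Ω) {w : E2} {d : ℝ} (hw : w ∈ frontier Ω)
    (hd : infDist x (frontier Ω) = d) (hdw : dist x w = d) :
    ∀ t : ℝ, t ∈ Icc (0:ℝ) 1 → x + t • (w - x) ∈ closure Ω := by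
  intro t ht
  rcases eq_or_lt_of_le (hd ▸ infDist_nonneg : (0:ℝ) ≤ d) with hd0 | hd0
  · have : w = x := by rw [← dist_eq_zero, dist_comm, hdw, hd0]
    rw [this]; simpa using hx
  rcases eq_or_lt_of_le ht.2 with ht1 | ht1
  · rw [ht1]; simpa using frontier_subset_closure hw
  have key := seg_mem_closure hx (x + t • (w - x)) (fun u hu => by
    have : x + u • (x + t • (w - x) - x) = x + (u * t) • (w - x) := by
      rw [add_sub_cancel_left, smul_smul]
    rw [this, seg_infDist hw hd hdw (u * t)
      ⟨mul_nonneg hu.1 ht.1, mul_le_one₀ hu.2 ht.1 ht.2⟩]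
    have : u * t ≤ t := mul_le_of_le_one_left ht.1 hu.2
    have : 1 - u * t > 0 := by nlinarith [hu.1, hu.2, ht.1]
    positivity) 1 ⟨zero_le_one, le_refl 1⟩
  simpa using key

lemma infDist_le_diam_frontier (hΩ : IsOpen Ω) (hb : Bornology.IsBounded Ω) {x : E2}
    (hx : x ∈ closure Ω) : infDist x (frontier Ω) ≤ diam (frontier Ω) := by
  set F := frontier Ω with hF
  set d := infDist x F with hd
  rcases le_or_gt d 0 with hd0 | hd0
  · exact hd0.trans diam_nonneg
  have hFne : F.Nonempty := by
    by_contra hne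
    rw [not_nonempty_iff_eq_empty] at hne
    rw [hd, hne] at hd0
    simp at hd0
  have hFb : Bornology.IsBounded F := hb.closure.subset frontier_subset_closure
  have hFc : IsCompact F := Metric.isCompact_of_isClosed_isBounded isClosed_frontier hFb
  obtain ⟨w, hwF, hwd⟩ := hFc.exists_infDist_eq_dist hFne x
  set r : ℝ → E2 := fun t => w + t • (x - w) with hr
  set S : Set ℝ := {t | 0 ≤ t ∧ r t ∈ closure Ω} with hS
  have h1S : (1:ℝ) ∈ S := by
    constructor
    · norm_num
    · show w + (1:ℝ) • (x - w) ∈ closure Ω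
      rw [one_smul]
      simpa using hx
  have hdxw : dist x w = d := by rw [← hwd, hd]
  have hxw : ‖x - w‖ = d := by rw [← dist_eq_norm, hdxw]
  obtain ⟨R, hR⟩ := (hb.closure).subset_closedBall 0
  have hbdd : BddAbove S := by
    refine ⟨(R + ‖w‖) / d, fun t ht => ?_⟩
    have h2 : ‖r t‖ ≤ R := by simpa using hR ht.2
    have h3 : t * d - ‖w‖ ≤ ‖r t‖ := by
      have h4 : ‖t • (x - w)‖ - ‖w‖ ≤ ‖w + t • (x - w)‖ := by
        have h6 := norm_add_le (w + t • (x - w)) (-w)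
        have h5 : w + t • (x - w) + -w = t • (x - w) := by module
        rw [h5, norm_neg] at h6
        linarith
      rw [norm_smul, Real.norm_eq_abs, abs_of_nonneg ht.1, hxw] at h4
      exact h4
    rw [le_div_iff₀ hd0]
    linarith
  have hScl : IsClosed S := by
    apply IsClosed.inter (isClosed_le continuous_const continuous_id)
    exact isClosed_closure.preimage (continuous_const.add (continuous_id.smul continuous_const))
  have hTmem : sSup S ∈ S := hScl.csSup_mem ⟨1, h1S⟩ hbdd
  set T := sSup S with hT
  have hT1 : 1 ≤ T := le_csSup hbdd h1S
  have hzcl : r T ∈ closure Ω := hTmem.2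
  have hznΩ : r T ∉ Ω := by
    intro hzΩ
    obtain ⟨ρ, hρ0, hρ⟩ := Metric.isOpen_iff.1 hΩ _ hzΩ
    have hρd : 0 < ρ / (2 * d) := div_pos hρ0 (by linarith)
    have hη : r (T + ρ / (2 * d)) ∈ Ω := by
      apply hρ
      rw [mem_ball]
      have heq : r (T + ρ / (2 * d)) - r T = (ρ / (2 * d)) • (x - w) := by
        simp only [hr]
        module
      rw [dist_eq_norm, heq, norm_smul, Real.norm_eq_abs, hxw,
        abs_of_nonneg (le_of_lt hρd)]
      have : ρ / (2 * d) * d = ρ / 2 := by field_simp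
      rw [this]
      linarith
    have hmem : T + ρ / (2 * d) ∈ S := ⟨by linarith, subset_closure hη⟩
    have := le_csSup hbdd hmem
    linarith
  have hzF : r T ∈ F := by
    rw [hF, hΩ.frontier_eq]
    exact ⟨hzcl, hznΩ⟩
  have hdist : dist w (r T) = T * d := by
    rw [dist_eq_norm]
    have : w - r T = (-T) • (x - w) := by simp only [hr]; module
    rw [this, norm_smul, Real.norm_eq_abs, abs_neg, abs_of_nonneg (by linarith), hxw]
  calc d ≤ T * d := by nlinarith
    _ = dist w (r T) := hdist.symm
    _ ≤ diam F := dist_le_diam_of_mem hFb hwF hzF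
section Construction

variable {Ω : Set E2} {φ : ℝ → ℝ}

lemma levelSet_spec {ε : ℝ} {z : E2} (hz : z ∈ levelSet Ω ε) :
    z ∈ closure Ω ∧ infDist z (frontier Ω) = ε := by
  rcases eq_or_ne ε 0 with h0 | h0
  · subst h0
    rw [levelSet, if_pos rfl] at hz
    exact ⟨frontier_subset_closure hz, infDist_zero_of_mem hz⟩
  · rw [levelSet, if_neg h0] at hz
    exact ⟨subset_closure hz.1, hz.2⟩

lemma mem_levelSet_pos (hΩ : IsOpen Ω) {ε : ℝ} (hε : 0 < ε) {z : E2}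
    (hzc : z ∈ closure Ω) (hzi : infDist z (frontier Ω) = ε) : z ∈ levelSet Ω ε := by
  rw [levelSet, if_neg hε.ne']
  refine ⟨?_, hzi⟩
  have h1 : z ∉ frontier Ω := by
    intro h
    rw [infDist_zero_of_mem h] at hzi
    exact hε.ne hzi
  have h2 := closure_eq_interior_union_frontier Ω ▸ hzc
  rw [hΩ.interior_eq] at h2
  exact h2.resolve_right h1

lemma mem_dome {z : E2} (hz : z ∈ closure Ω) {s : ℝ} (hs : s = 1 ∨ s = -1) :
    mk3 z (s * φ (infDist z (frontier Ω))) ∈ domeSurface Ω φ := by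
  refine ⟨z, hz, ?_⟩
  rcases hs with h | h <;> subst h
  · left; rw [one_mul]
  · right; rw [neg_one_mul]

lemma range_cast {X : Type*} [TopologicalSpace X] {x y x' y' : X} (γ : Path x y)
    (hx : x' = x) (hy : y' = y) : range (γ.cast hx hy) = range γ := by
  have : (γ.cast hx hy : unitInterval → X) = γ := Path.cast_coe γ hx hy
  rw [this]

lemma target_mem_range {X : Type*} [TopologicalSpace X] {x y : X} (γ : Path x y) :
    y ∈ range γ := ⟨1, γ.target⟩

lemma source_mem_range {X : Type*} [TopologicalSpace X] {x y : X} (γ : Path x y) :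
    x ∈ range γ := ⟨0, γ.source⟩

/-- Descending path from a point of the surface down to a prescribed lower level,
along the segment to a nearest boundary point. -/
lemma desc_exists (hΩ : IsOpen Ω) (hb : Bornology.IsBounded Ω)
    (hFne : (frontier Ω).Nonempty) (hφ : GaugeF φ)
    {x : E2} (hx : x ∈ closure Ω) {d : ℝ} (hd : infDist x (frontier Ω) = d)
    {e : ℝ} (he0 : 0 ≤ e) (hed : e ≤ d) {s : ℝ} (hs : s = 1 ∨ s = -1) :
    ∃ x' : E2, x' ∈ closure Ω ∧ infDist x' (frontier Ω) = e ∧ dist x x' ≤ d - e ∧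
      ∃ γ : Path (mk3 x (s * φ d)) (mk3 x' (s * φ e)),
        range γ ⊆ domeSurface Ω φ ∧ diam (range γ) ≤ (d - e) + (φ d - φ e) := by
  have hd0 : 0 ≤ d := hd ▸ infDist_nonneg
  have hFb : Bornology.IsBounded (frontier Ω) := hb.closure.subset frontier_subset_closure
  have hFc : IsCompact (frontier Ω) := Metric.isCompact_of_isClosed_isBounded isClosed_frontier hFb
  obtain ⟨w, hwF, hwd⟩ := hFc.exists_infDist_eq_dist hFne x
  have hdw : dist x w = d := by rw [← hwd, hd]
  -- the planar point at parameter t of the reparametrized descent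
  set q : ℝ → E2 := fun t => x + ((d - e) * t / d) • (w - x) with hq
  have hcoef : ∀ t : ℝ, t ∈ Icc (0:ℝ) 1 → (d - e) * t / d ∈ Icc (0:ℝ) 1 := by
    intro t ht
    rcases eq_or_lt_of_le hd0 with h | h
    · constructor <;> simp [← h]
    · constructor
      · exact div_nonneg (mul_nonneg (by linarith) ht.1) hd0
      · rw [div_le_one h]; nlinarith [ht.1, ht.2]
  have key : ∀ t : ℝ, t ∈ Icc (0:ℝ) 1 →
      q t ∈ closure Ω ∧ infDist (q t) (frontier Ω) = d + t * (e - d) := by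
    intro t ht
    rcases eq_or_lt_of_le hd0 with h | h
    · have he' : e = 0 := le_antisymm (hed.trans h.symm.le) he0
      have : q t = x := by
        simp [hq, ← h, he']
      rw [this, hd, ← h, he']
      exact ⟨hx, by ring⟩
    · have h1 := seg_closure hx hwF hd hdw _ (hcoef t ht)
      have h2 := seg_infDist hwF hd hdw _ (hcoef t ht)
      refine ⟨h1, ?_⟩
      rw [h2]
      field_simp
      ring
  set x' : E2 := q 1 with hx'
  have hx'c : x' ∈ closure Ω := (key 1 (by norm_num)).1
  have hx'i : infDist x' (frontier Ω) = e := by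
    have := (key 1 (by norm_num)).2
    rw [← hx'] at this
    rw [this]; ring
  have hxx' : dist x x' = (d - e) * ‖w - x‖ / d := by
    rw [hx', hq, dist_eq_norm]
    have : x - (x + ((d - e) * 1 / d) • (w - x)) = (-((d - e) * 1 / d)) • (w - x) := by module
    rw [this, norm_smul, Real.norm_eq_abs, abs_neg, abs_of_nonneg (hcoef 1 (by norm_num)).1]
    ring
  have hwx : ‖w - x‖ = d := by rw [← dist_eq_norm, dist_comm, hdw]
  have hxx'2 : dist x x' ≤ d - e := by
    rw [hxx', hwx]
    rcases eq_or_lt_of_le hd0 with h | h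
    · have he' : e = 0 := le_antisymm (hed.trans h.symm.le) he0
      simp [← h, he']
    · field_simp; exact le_rfl
  have hmono := hφ.strictMonoOn.monotoneOn
  have hlmem : ∀ t : ℝ, t ∈ Icc (0:ℝ) 1 → d + t * (e - d) ∈ Icc e d := by
    intro t ht
    constructor <;> nlinarith [ht.1, ht.2]
  have hφle : ∀ t : ℝ, t ∈ Icc (0:ℝ) 1 → φ e ≤ φ (d + t * (e - d)) ∧ φ (d + t * (e - d)) ≤ φ d := by
    intro t ht
    have h1 := hlmem t ht
    exact ⟨hmono (mem_Ici.2 he0) (mem_Ici.2 (he0.trans h1.1)) h1.1,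
      hmono (mem_Ici.2 (he0.trans h1.1)) (mem_Ici.2 hd0) h1.2⟩
  refine ⟨x', hx'c, hx'i, hxx'2, ?_⟩
  refine ⟨⟨⟨fun t => mk3 (q t) (s * φ (d + (t:ℝ) * (e - d))), ?_⟩, ?_, ?_⟩, ?_, ?_⟩
  · apply Continuous.mk3'
    · exact continuous_const.add
        (((((continuous_const.mul continuous_subtype_val)).div_const d)).smul continuous_const)
    · apply continuous_const.mul
      have : Continuous fun t : unitInterval => d + (t:ℝ) * (e - d) :=
        continuous_const.add (continuous_subtype_val.mul continuous_const)
      exact hφ.continuousOn.comp_continuous this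
        (fun t => mem_Ici.2 ((hlmem _ t.2).1.trans' he0))
  · show mk3 (q 0) (s * φ (d + (0:ℝ) * (e - d))) = mk3 x (s * φ d)
    have h1 : q 0 = x := by simp [hq]
    rw [h1]
    norm_num
  · show mk3 (q 1) (s * φ (d + (1:ℝ) * (e - d))) = mk3 x' (s * φ e)
    rw [← hx']
    norm_num
  · rintro p ⟨t, rfl⟩
    show mk3 (q t) (s * φ (d + (t:ℝ) * (e - d))) ∈ domeSurface Ω φ
    have h1 := key t t.2
    have heq2 : mk3 (q t) (s * φ (d + (t:ℝ) * (e - d)))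
        = mk3 (q t) (s * φ (infDist (q t) (frontier Ω))) := by rw [h1.2]
    rw [heq2]
    exact mem_dome h1.1 hs
  · apply diam_le_of_forall_dist_le
      (by nlinarith [(hφle 0 (by norm_num)).1, (hφle 0 (by norm_num)).2])
    rintro p ⟨t, rfl⟩ p' ⟨t', rfl⟩
    show dist (mk3 (q t) (s * φ (d + (t:ℝ) * (e - d)))) (mk3 (q t') (s * φ (d + (t':ℝ) * (e - d)))) ≤ _
    have hplan : dist (q t) (q t') ≤ d - e := by
      rw [hq, dist_eq_norm]
      have heq : x + ((d - e) * (t:ℝ) / d) • (w - x) - (x + ((d - e) * (t':ℝ) / d) • (w - x))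
          = ((d - e) * (t:ℝ) / d - (d - e) * (t':ℝ) / d) • (w - x) := by module
      rw [heq, norm_smul, Real.norm_eq_abs, hwx]
      rcases eq_or_lt_of_le hd0 with h | h
      · have he' : e = 0 := le_antisymm (hed.trans h.symm.le) he0
        simp [← h, he']
      · have hde : (0:ℝ) ≤ (d - e) / d := div_nonneg (by linarith) hd0
        have habs : |(d - e) * (t:ℝ) / d - (d - e) * (t':ℝ) / d|
            = (d - e) / d * |(t:ℝ) - (t':ℝ)| := by
          rw [← abs_of_nonneg hde, ← abs_mul]
          congr 1
          ring
        have htt : |(t:ℝ) - (t':ℝ)| ≤ 1 := by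
          rw [abs_le]
          constructor <;> nlinarith [t.2.1, t.2.2, t'.2.1, t'.2.2]
        calc |(d - e) * (t:ℝ) / d - (d - e) * (t':ℝ) / d| * d
            = (d - e) / d * |(t:ℝ) - (t':ℝ)| * d := by rw [habs]
          _ ≤ (d - e) / d * 1 * d := by
              apply mul_le_mul_of_nonneg_right _ hd0
              exact mul_le_mul_of_nonneg_left htt hde
          _ = d - e := by field_simp
    have hvert : |s * φ (d + (t:ℝ) * (e - d)) - s * φ (d + (t':ℝ) * (e - d))| ≤ φ d - φ e := by
      have hs1 : |s| = 1 := by rcases hs with h | h <;> simp [h]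
      rw [← mul_sub, abs_mul, hs1, one_mul, abs_le]
      have h1 := hφle t t.2
      have h2 := hφle t' t'.2
      constructor <;> linarith [h1.1, h1.2, h2.1, h2.2]
    calc dist (mk3 (q t) (s * φ (d + (t:ℝ) * (e - d)))) (mk3 (q t') (s * φ (d + (t':ℝ) * (e - d))))
        ≤ dist (q t) (q t') + |s * φ (d + (t:ℝ) * (e - d)) - s * φ (d + (t':ℝ) * (e - d))| :=
          dist_mk3_le _ _ _ _
      _ ≤ (d - e) + (φ d - φ e) := add_le_add hplan hvert

/-- Joining two points of a level set along a lifted subarc, using the 2-point condition. -/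
lemma level_join (hφ : GaugeF φ) {C ε : ℝ} (hC : 1 < C)
    (h2 : TwoPointCondition (levelSet Ω ε) C)
    {a b : E2} (ha : a ∈ levelSet Ω ε) (hb : b ∈ levelSet Ω ε) {s : ℝ} (hs : s = 1 ∨ s = -1) :
    ∃ γ : Path (mk3 a (s * φ ε)) (mk3 b (s * φ ε)),
      range γ ⊆ domeSurface Ω φ ∧ diam (range γ) ≤ C * dist a b := by
  have hmem : ∀ z ∈ levelSet Ω ε, mk3 z (s * φ ε) ∈ domeSurface Ω φ := by
    intro z hz
    obtain ⟨hzc, hzi⟩ := levelSet_spec hz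
    rw [← hzi]
    exact mem_dome hzc hs
  rcases eq_or_ne a b with rfl | hne
  · refine ⟨Path.refl _, ?_, ?_⟩
    · rw [Path.refl_range]
      intro p hp
      rw [mem_singleton_iff] at hp
      rw [hp]
      exact hmem a ha
    · rw [Path.refl_range, diam_singleton]
      positivity
  obtain ⟨A, ⟨hAΓ, f, hfc, hfi, hf0, hf1, hfim⟩, hdiamA⟩ := h2 a ha b hb hne
  have hAb : Bornology.IsBounded A := by
    rw [← hfim]
    exact (isCompact_Icc.image_of_continuousOn hfc).isBounded
  have hmemA : ∀ t : unitInterval, f (t : ℝ) ∈ A := by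
    intro t
    rw [← hfim]
    exact mem_image_of_mem f t.2
  refine ⟨⟨⟨fun t => mk3 (f (t : ℝ)) (s * φ ε), ?_⟩, ?_, ?_⟩, ?_, ?_⟩
  · exact Continuous.mk3' (hfc.comp_continuous continuous_subtype_val fun t => t.2)
      continuous_const
  · show mk3 (f ((0 : unitInterval) : ℝ)) (s * φ ε) = mk3 a (s * φ ε)
    rw [Set.Icc.coe_zero, hf0]
  · show mk3 (f ((1 : unitInterval) : ℝ)) (s * φ ε) = mk3 b (s * φ ε)
    rw [Set.Icc.coe_one, hf1]
  · rintro p ⟨t, rfl⟩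
    exact hmem _ (hAΓ (hmemA t))
  · apply diam_le_of_forall_dist_le (mul_nonneg (by linarith) dist_nonneg)
    rintro p ⟨t, rfl⟩ p' ⟨t', rfl⟩
    show dist (mk3 (f (t : ℝ)) (s * φ ε)) (mk3 (f (t' : ℝ)) (s * φ ε)) ≤ _
    calc dist (mk3 (f (t : ℝ)) (s * φ ε)) (mk3 (f (t' : ℝ)) (s * φ ε))
        ≤ dist (f (t : ℝ)) (f (t' : ℝ)) + |s * φ ε - s * φ ε| := dist_mk3_le _ _ _ _
      _ = dist (f (t : ℝ)) (f (t' : ℝ)) := by simp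
      _ ≤ diam A := dist_le_diam_of_mem hAb (hmemA t) (hmemA t')
      _ ≤ C * dist a b := hdiamA

/-- Lifting a straight planar segment that stays well inside the domain. -/
lemma seg_lift (hΩ : IsOpen Ω) (hφ : GaugeF φ) {L' : NNReal} {ε₀ : ℝ} (hε₀ : 0 < ε₀)
    (hLip : LipschitzOnWith L' φ (Ici (ε₀ / 3)))
    {x₁ x₂ : E2} (h1c : x₁ ∈ closure Ω) {δ : ℝ}
    (hxd : dist x₁ x₂ ≤ δ) (hlow : ε₀ / 3 ≤ infDist x₁ (frontier Ω) - δ)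
    {s : ℝ} (hs : s = 1 ∨ s = -1) :
    ∃ γ : Path (mk3 x₁ (s * φ (infDist x₁ (frontier Ω))))
        (mk3 x₂ (s * φ (infDist x₂ (frontier Ω)))),
      range γ ⊆ domeSurface Ω φ ∧ diam (range γ) ≤ δ + 2 * (L' : ℝ) * δ := by
  set F := frontier Ω with hF
  set q : ℝ → E2 := fun t => x₁ + t • (x₂ - x₁) with hq
  have hδ0 : 0 ≤ δ := dist_nonneg.trans hxd
  have hqd : ∀ t : ℝ, t ∈ Icc (0:ℝ) 1 → dist x₁ (q t) ≤ δ := by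
    intro t ht
    rw [hq, dist_eq_norm]
    have : x₁ - (x₁ + t • (x₂ - x₁)) = (-t) • (x₂ - x₁) := by module
    rw [this, norm_smul, Real.norm_eq_abs, abs_neg, abs_of_nonneg ht.1, ← dist_eq_norm,
      dist_comm x₂ x₁]
    nlinarith [ht.1, ht.2, dist_nonneg (x := x₁) (y := x₂), hxd]
  have hqinf : ∀ t : ℝ, t ∈ Icc (0:ℝ) 1 → ε₀ / 3 ≤ infDist (q t) F ∧
      |infDist (q t) F - infDist x₁ F| ≤ δ := by
    intro t ht
    have h1 : infDist x₁ F ≤ infDist (q t) F + dist x₁ (q t) := infDist_le_infDist_add_dist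
    have h2 : infDist (q t) F ≤ infDist x₁ F + dist (q t) x₁ := infDist_le_infDist_add_dist
    rw [dist_comm] at h2
    have h3 := hqd t ht
    constructor
    · linarith
    · rw [abs_le]; constructor <;> linarith
  have hqcl : ∀ t : ℝ, t ∈ Icc (0:ℝ) 1 → q t ∈ closure Ω := by
    apply seg_mem_closure h1c
    intro t ht
    have := (hqinf t ht).1
    have : (0:ℝ) < ε₀ / 3 := by linarith
    linarith [(hqinf t ht).1]
  refine ⟨⟨⟨fun t => mk3 (q (t : ℝ)) (s * φ (infDist (q (t : ℝ)) F)), ?_⟩, ?_, ?_⟩, ?_, ?_⟩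
  · apply Continuous.mk3'
    · exact continuous_const.add (continuous_subtype_val.smul continuous_const)
    · apply continuous_const.mul
      apply hφ.continuousOn.comp_continuous
      · exact (continuous_infDist_pt F).comp
          (continuous_const.add (continuous_subtype_val.smul continuous_const))
      · exact fun t => mem_Ici.2 infDist_nonneg
  · show mk3 (q ((0 : unitInterval) : ℝ)) (s * φ (infDist (q ((0 : unitInterval) : ℝ)) F))
        = mk3 x₁ (s * φ (infDist x₁ F))
    have h1 : q ((0 : unitInterval) : ℝ) = x₁ := by simp [hq]
    rw [h1]
  · show mk3 (q ((1 : unitInterval) : ℝ)) (s * φ (infDist (q ((1 : unitInterval) : ℝ)) F))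
        = mk3 x₂ (s * φ (infDist x₂ F))
    have h1 : q ((1 : unitInterval) : ℝ) = x₂ := by simp [hq]
    rw [h1]
  · rintro p ⟨t, rfl⟩
    exact mem_dome (hqcl t t.2) hs
  · apply diam_le_of_forall_dist_le (by positivity)
    rintro p ⟨t, rfl⟩ p' ⟨t', rfl⟩
    show dist (mk3 (q (t : ℝ)) (s * φ (infDist (q (t : ℝ)) F)))
        (mk3 (q (t' : ℝ)) (s * φ (infDist (q (t' : ℝ)) F))) ≤ _
    have hplan : dist (q (t : ℝ)) (q (t' : ℝ)) ≤ δ := by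
      rw [hq, dist_eq_norm]
      have heq : x₁ + (t : ℝ) • (x₂ - x₁) - (x₁ + (t' : ℝ) • (x₂ - x₁))
          = ((t : ℝ) - (t' : ℝ)) • (x₂ - x₁) := by module
      rw [heq, norm_smul, Real.norm_eq_abs, ← dist_eq_norm, dist_comm x₂ x₁]
      have htt : |(t : ℝ) - (t' : ℝ)| ≤ 1 := by
        rw [abs_le]
        constructor <;> nlinarith [t.2.1, t.2.2, t'.2.1, t'.2.2]
      nlinarith [dist_nonneg (x := x₁) (y := x₂), hxd, abs_nonneg ((t : ℝ) - (t' : ℝ))]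
    have hvert : |s * φ (infDist (q (t : ℝ)) F) - s * φ (infDist (q (t' : ℝ)) F)|
        ≤ 2 * (L' : ℝ) * δ := by
      have hs1 : |s| = 1 := by rcases hs with h | h <;> simp [h]
      rw [← mul_sub, abs_mul, hs1, one_mul]
      have h1 := hqinf t t.2
      have h2 := hqinf t' t'.2
      have hlip := hLip.dist_le_mul _ (mem_Ici.2 h1.1) _ (mem_Ici.2 h2.1)
      rw [Real.dist_eq, Real.dist_eq] at hlip
      have h3 : |infDist (q (t : ℝ)) F - infDist (q (t' : ℝ)) F| ≤ 2 * δ := by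
        have := abs_sub (infDist (q (t : ℝ)) F - infDist x₁ F)
          (infDist (q (t' : ℝ)) F - infDist x₁ F)
        calc |infDist (q (t : ℝ)) F - infDist (q (t' : ℝ)) F|
            = |(infDist (q (t : ℝ)) F - infDist x₁ F) - (infDist (q (t' : ℝ)) F - infDist x₁ F)| := by
              congr 1; ring
          _ ≤ |infDist (q (t : ℝ)) F - infDist x₁ F| + |infDist (q (t' : ℝ)) F - infDist x₁ F| :=
              abs_sub _ _
          _ ≤ 2 * δ := by linarith [h1.2, h2.2]
      calc |φ (infDist (q (t : ℝ)) F) - φ (infDist (q (t' : ℝ)) F)|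
          ≤ (L' : ℝ) * |infDist (q (t : ℝ)) F - infDist (q (t' : ℝ)) F| := hlip
        _ ≤ (L' : ℝ) * (2 * δ) := mul_le_mul_of_nonneg_left h3 L'.2
        _ = 2 * (L' : ℝ) * δ := by ring
    calc dist (mk3 (q (t : ℝ)) (s * φ (infDist (q (t : ℝ)) F))) (mk3 (q (t' : ℝ)) (s * φ (infDist (q (t' : ℝ)) F))) ≤ dist (q (t : ℝ)) (q (t' : ℝ)) + |s * φ (infDist (q (t : ℝ)) F) - s * φ (infDist (q (t' : ℝ)) F)| := dist_mk3_le _ _ _ _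
      _ ≤ δ + 2 * (L' : ℝ) * δ := add_le_add hplan hvert

lemma extend_image_Icc {X : Type*} [TopologicalSpace X] {x y : X} (γ : Path x y) :
    γ.extend '' Icc 0 1 = range γ := by
  ext z
  constructor
  · rintro ⟨t, ht, rfl⟩
    rw [Path.extend_apply γ ht]
    exact ⟨⟨t, ht⟩, rfl⟩
  · rintro ⟨u, rfl⟩
    exact ⟨(u : ℝ), u.2, γ.extend_extends' u⟩

lemma pack {S : Set E3} {y₁ y₂ : E3} {B : ℝ} (γ : Path y₁ y₂) (hsub : range γ ⊆ S)
    (hd : diam (range γ) ≤ B) :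
    ∃ σ : Set E3, σ ⊆ S ∧ y₁ ∈ σ ∧ y₂ ∈ σ ∧
      (∃ g : ℝ → E3, ContinuousOn g (Icc 0 1) ∧ g 0 = y₁ ∧ g 1 = y₂ ∧
        g '' (Icc 0 1) = σ) ∧ diam σ ≤ B :=
  ⟨range γ, hsub, source_mem_range γ, target_mem_range γ,
    ⟨γ.extend, γ.continuous_extend.continuousOn, γ.extend_zero, γ.extend_one,
      extend_image_Icc γ⟩, hd⟩

set_option maxHeartbeats 2000000 in
/-- The core construction: a bounded-turning curve between two represented points of the
surface, assuming the first one is at most as deep as the second. -/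
lemma core {Ω : Set E2} {φ : ℝ → ℝ} {C L M ε₀ : ℝ}
    (hJ : IsJordanDomain Ω) (hC : 1 < C) (hε₀ : 0 < ε₀)
    (h2pt : ∀ ε, 0 ≤ ε → ε ≤ ε₀ →
      IsJordanCurve (levelSet Ω ε) ∧ TwoPointCondition (levelSet Ω ε) C)
    (hφ : GaugeF φ) (hLip : LipschitzOnWith (Real.toNNReal L) φ (Ici (ε₀ / 3)))
    (hM : 1 < M) (hMφ : ∀ t, 0 < t → t ≤ Metric.diam (frontier Ω) → M * t < φ t)
    (hFne : (frontier Ω).Nonempty)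
    {x₁ x₂ : E2} (hx₁c : x₁ ∈ closure Ω) (hx₂c : x₂ ∈ closure Ω)
    {s₁ s₂ : ℝ} (hs₁ : s₁ = 1 ∨ s₁ = -1) (hs₂ : s₂ = 1 ∨ s₂ = -1)
    (hord : infDist x₁ (frontier Ω) ≤ infDist x₂ (frontier Ω)) :
    ∃ γ : Path (mk3 x₁ (s₁ * φ (infDist x₁ (frontier Ω))))
        (mk3 x₂ (s₂ * φ (infDist x₂ (frontier Ω)))),
      range γ ⊆ domeSurface Ω φ ∧
      diam (range γ) ≤ (12 + 5 * |C| + 4 * max L 0) *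
        dist (mk3 x₁ (s₁ * φ (infDist x₁ (frontier Ω))))
             (mk3 x₂ (s₂ * φ (infDist x₂ (frontier Ω)))) := by
  obtain ⟨hΩ, hconn, hb, hJC⟩ := hJ
  set F := frontier Ω with hF
  set d₁ := infDist x₁ F with hd₁
  set d₂ := infDist x₂ F with hd₂
  set δ := dist (mk3 x₁ (s₁ * φ d₁)) (mk3 x₂ (s₂ * φ d₂)) with hδ
  set L' : ℝ := (Real.toNNReal L : ℝ) with hL'
  have hL'eq : L' = max L 0 := Real.coe_toNNReal' L
  have hL'0 : 0 ≤ L' := (Real.toNNReal L).2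
  have hCabs : |C| = C := abs_of_pos (by linarith)
  have hδ0 : 0 ≤ δ := dist_nonneg
  have hd₁0 : 0 ≤ d₁ := infDist_nonneg
  have hd₂0 : 0 ≤ d₂ := infDist_nonneg
  have hplanar : dist x₁ x₂ ≤ δ := planar_le_dist_mk3 _ _ _ _
  have hver : |s₁ * φ d₁ - s₂ * φ d₂| ≤ δ := vert_le_dist_mk3 _ _ _ _
  have hmono := hφ.strictMonoOn.monotoneOn
  have hφ0 : ∀ t : ℝ, 0 ≤ t → 0 ≤ φ t := by
    intro t ht
    have := hmono (mem_Ici.2 le_rfl) (mem_Ici.2 ht) ht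
    rw [hφ.map_zero] at this
    exact this
  have hφ10 : 0 ≤ φ d₁ := hφ0 _ hd₁0
  have hφ20 : 0 ≤ φ d₂ := hφ0 _ hd₂0
  have hφord : φ d₁ ≤ φ d₂ := hmono (mem_Ici.2 hd₁0) (mem_Ici.2 hd₂0) hord
  have habs : |φ d₁ - φ d₂| ≤ δ := by
    have h1 : |φ d₁ - φ d₂| ≤ |s₁ * φ d₁ - s₂ * φ d₂| := by
      rcases hs₁ with h | h <;> rcases hs₂ with h' | h' <;> subst h <;> subst h' <;>
        simp only [one_mul, neg_one_mul]
      · exact le_refl _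
      · rw [sub_neg_eq_add, abs_of_nonneg (by linarith : (0:ℝ) ≤ φ d₁ + φ d₂)]
        have := abs_sub_abs_le_abs_sub (φ d₁) (φ d₂)
        rw [abs_le]
        constructor <;> [linarith [abs_nonneg (φ d₁ - φ d₂)]; skip]
        rcases abs_cases (φ d₁ - φ d₂) with ⟨h1, _⟩ | ⟨h1, _⟩ <;> linarith
      · rw [show -φ d₁ - φ d₂ = -(φ d₁ + φ d₂) by ring, abs_neg,
          abs_of_nonneg (by linarith : (0:ℝ) ≤ φ d₁ + φ d₂)]
        rcases abs_cases (φ d₁ - φ d₂) with ⟨h1, _⟩ | ⟨h1, _⟩ <;> linarith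
      · rw [show -φ d₁ - -φ d₂ = -(φ d₁ - φ d₂) by ring, abs_neg]
    linarith
  have hdd : d₂ - d₁ ≤ δ := by
    have h2 : d₂ ≤ d₁ + dist x₂ x₁ := infDist_le_infDist_add_dist
    rw [dist_comm] at h2
    linarith
  have hdφ : ∀ x : E2, x ∈ closure Ω → infDist x F ≤ φ (infDist x F) := by
    intro x hx
    rcases eq_or_lt_of_le (infDist_nonneg : (0:ℝ) ≤ infDist x F) with h | h
    · rw [← h, hφ.map_zero]
    · have h1 : infDist x F ≤ diam F := infDist_le_diam_frontier hΩ hb hx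
      have h2 := hMφ _ h h1
      nlinarith
  by_cases hcase : φ d₁ ≤ δ
  · -- Case A : go through the boundary
    have hφ2δ : φ d₂ ≤ 2 * δ := by
      rcases abs_cases (φ d₁ - φ d₂) with ⟨h1, _⟩ | ⟨h1, _⟩ <;> linarith
    have hd1δ : d₁ ≤ δ := (hdφ x₁ hx₁c).trans hcase
    have hd2δ : d₂ ≤ 2 * δ := (hdφ x₂ hx₂c).trans hφ2δ
    obtain ⟨x₁', h₁'c, h₁'i, h₁'d, γ₁, hγ₁s, hγ₁d⟩ :=
      desc_exists hΩ hb hFne hφ hx₁c hd₁.symm le_rfl hd₁0 hs₁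
    obtain ⟨x₂', h₂'c, h₂'i, h₂'d, γ₂, hγ₂s, hγ₂d⟩ :=
      desc_exists hΩ hb hFne hφ hx₂c hd₂.symm le_rfl hd₂0 hs₂
    have h₁'F : x₁' ∈ levelSet Ω 0 := by
      rw [levelSet, if_pos rfl]
      have : x₁' ∈ closure F := (mem_closure_iff_infDist_zero hFne).2 h₁'i
      rwa [isClosed_frontier.closure_eq] at this
    have h₂'F : x₂' ∈ levelSet Ω 0 := by
      rw [levelSet, if_pos rfl]
      have : x₂' ∈ closure F := (mem_closure_iff_infDist_zero hFne).2 h₂'i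
      rwa [isClosed_frontier.closure_eq] at this
    obtain ⟨arc, harcs, harcd⟩ := level_join hφ hC (h2pt 0 le_rfl hε₀.le).2 h₁'F h₂'F hs₁
    have hcast : mk3 x₂' (s₁ * φ 0) = mk3 x₂' (s₂ * φ 0) := by
      rw [hφ.map_zero, mul_zero, mul_zero]
    set γ₂c := γ₂.cast rfl hcast with hγ₂c
    refine ⟨γ₁.trans (arc.trans γ₂c.symm), ?_, ?_⟩
    · rw [Path.trans_range, Path.trans_range, Path.symm_range]
      rw [hγ₂c, range_cast]
      exact union_subset hγ₁s (union_subset harcs hγ₂s)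
    · have hdist12 : dist x₁' x₂' ≤ 5 * δ := by
        have t1 : dist x₁' x₂' ≤ dist x₁' x₁ + dist x₁ x₂ + dist x₂ x₂' := dist_triangle4 _ _ _ _
        rw [dist_comm x₁' x₁] at t1
        linarith [h₁'d, h₂'d, hplanar]
      have b1 : diam (range γ₁) ≤ 2 * δ := by
        have hz : φ 0 = 0 := hφ.map_zero
        linarith [hγ₁d]
      have b2 : diam (range arc) ≤ C * (5 * δ) := by
        refine harcd.trans ?_
        exact mul_le_mul_of_nonneg_left hdist12 (by linarith)
      have b3 : diam (range γ₂c.symm) ≤ 4 * δ := by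
        rw [Path.symm_range, hγ₂c, range_cast]
        have hz : φ 0 = 0 := hφ.map_zero
        linarith [hγ₂d]
      rw [Path.trans_range, Path.trans_range]
      have i1 : (range arc ∩ range γ₂c.symm).Nonempty := by
        refine ⟨mk3 x₂' (s₁ * φ 0), target_mem_range arc, ?_⟩
        rw [Path.symm_range, hγ₂c, range_cast]
        rw [hcast]
        exact target_mem_range γ₂
      have i2 : (range γ₁ ∩ (range arc ∪ range γ₂c.symm)).Nonempty :=
        ⟨mk3 x₁' (s₁ * φ 0), target_mem_range γ₁, Or.inl (source_mem_range arc)⟩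
      have u1 : diam (range arc ∪ range γ₂c.symm) ≤ C * (5 * δ) + 4 * δ :=
        (diam_union' i1).trans (add_le_add b2 b3)
      have u2 : diam (range γ₁ ∪ (range arc ∪ range γ₂c.symm)) ≤
          2 * δ + (C * (5 * δ) + 4 * δ) :=
        (diam_union' i2).trans (add_le_add b1 u1)
      refine u2.trans ?_
      rw [hCabs]
      nlinarith [hL'eq ▸ hL'0]
  · -- Case B : same sheet
    push_neg at hcase
    have hφ1pos : 0 < φ d₁ := hδ0.trans_lt hcase
    have hd₁pos : 0 < d₁ := by
      rcases eq_or_lt_of_le hd₁0 with h | h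
      · rw [← h, hφ.map_zero] at hφ1pos
        exact absurd hφ1pos (lt_irrefl 0)
      · exact h
    have hsign : s₂ = s₁ := by
      rcases hs₁ with h | h <;> rcases hs₂ with h' | h' <;> subst h <;> subst h'
      · rfl
      · exfalso
        rw [one_mul, neg_one_mul, sub_neg_eq_add,
          abs_of_nonneg (by linarith : (0:ℝ) ≤ φ d₁ + φ d₂)] at hver
        linarith
      · exfalso
        rw [neg_one_mul, one_mul, show -φ d₁ - φ d₂ = -(φ d₁ + φ d₂) by ring, abs_neg,
          abs_of_nonneg (by linarith : (0:ℝ) ≤ φ d₁ + φ d₂)] at hver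
        linarith
      · rfl
    subst hsign
    by_cases hBi : δ ≤ d₁ - ε₀ / 3
    · -- straight segment lift
      obtain ⟨γ, hγs, hγd⟩ := seg_lift hΩ hφ hε₀ hLip hx₁c hplanar (by
        rw [← hd₁]; linarith) hs₂
      refine ⟨γ, hγs, hγd.trans ?_⟩
      rw [hCabs, ← hL'eq]
      nlinarith
    · -- descend to level min d₁ ε₀ and use the level curve there
      push_neg at hBi
      set e := min d₁ ε₀ with he
      have he0 : 0 < e := lt_min hd₁pos hε₀
      have heε₀ : e ≤ ε₀ := min_le_right _ _
      have hed₁ : e ≤ d₁ := min_le_left _ _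
      have hed₂ : e ≤ d₂ := hed₁.trans hord
      have hd1e : d₁ - e ≤ δ := by
        rcases le_total d₁ ε₀ with h | h
        · rw [he, min_eq_left h]; linarith
        · rw [he, min_eq_right h]; linarith
      have hd2e : d₂ - e ≤ 2 * δ := by linarith
      have hφ1e : φ d₁ - φ e ≤ L' * δ := by
        rcases le_total d₁ ε₀ with h | h
        · rw [he, min_eq_left h, sub_self]
          positivity
        · rw [he, min_eq_right h]
          have hm1 : d₁ ∈ Ici (ε₀ / 3) := mem_Ici.2 (by linarith)
          have hm2 : ε₀ ∈ Ici (ε₀ / 3) := mem_Ici.2 (by linarith)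
          have hl := hLip.dist_le_mul _ hm1 _ hm2
          rw [Real.dist_eq, Real.dist_eq] at hl
          have h1 : |d₁ - ε₀| = d₁ - ε₀ := abs_of_nonneg (by linarith)
          rw [h1] at hl
          have h2 : φ d₁ - φ ε₀ ≤ |φ d₁ - φ ε₀| := le_abs_self _
          have h3 : (L' : ℝ) * (d₁ - ε₀) ≤ L' * δ :=
            mul_le_mul_of_nonneg_left (by linarith) hL'0
          exact h2.trans (hl.trans h3)
      have hφ2e : φ d₂ - φ e ≤ δ + L' * δ := by
        rcases abs_cases (φ d₁ - φ d₂) with ⟨h1, _⟩ | ⟨h1, _⟩ <;> linarith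
      obtain ⟨x₁', h₁'c, h₁'i, h₁'d, γ₁, hγ₁s, hγ₁d⟩ :=
        desc_exists hΩ hb hFne hφ hx₁c hd₁.symm he0.le hed₁ hs₂
      obtain ⟨x₂', h₂'c, h₂'i, h₂'d, γ₂, hγ₂s, hγ₂d⟩ :=
        desc_exists hΩ hb hFne hφ hx₂c hd₂.symm he0.le hed₂ hs₂
      obtain ⟨arc, harcs, harcd⟩ := level_join hφ hC (h2pt e he0.le heε₀).2
        (mem_levelSet_pos hΩ he0 h₁'c h₁'i) (mem_levelSet_pos hΩ he0 h₂'c h₂'i) hs₂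
      refine ⟨γ₁.trans (arc.trans γ₂.symm), ?_, ?_⟩
      · rw [Path.trans_range, Path.trans_range, Path.symm_range]
        exact union_subset hγ₁s (union_subset harcs hγ₂s)
      · have hdist12 : dist x₁' x₂' ≤ 4 * δ := by
          have t1 : dist x₁' x₂' ≤ dist x₁' x₁ + dist x₁ x₂ + dist x₂ x₂' := dist_triangle4 _ _ _ _
          rw [dist_comm x₁' x₁] at t1
          linarith [h₁'d, h₂'d, hplanar]
        have b1 : diam (range γ₁) ≤ δ + L' * δ := by linarith
        have b2 : diam (range arc) ≤ C * (4 * δ) :=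
          harcd.trans (mul_le_mul_of_nonneg_left hdist12 (by linarith))
        have b3 : diam (range γ₂.symm) ≤ 3 * δ + L' * δ := by
          rw [Path.symm_range]
          linarith
        rw [Path.trans_range, Path.trans_range]
        have i1 : (range arc ∩ range γ₂.symm).Nonempty := by
          refine ⟨mk3 x₂' (s₂ * φ e), target_mem_range arc, ?_⟩
          rw [Path.symm_range]
          exact target_mem_range γ₂
        have i2 : (range γ₁ ∩ (range arc ∪ range γ₂.symm)).Nonempty :=
          ⟨mk3 x₁' (s₂ * φ e), target_mem_range γ₁, Or.inl (source_mem_range arc)⟩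
        have u1 : diam (range arc ∪ range γ₂.symm) ≤ C * (4 * δ) + (3 * δ + L' * δ) :=
          (diam_union' i1).trans (add_le_add b2 b3)
        have u2 : diam (range γ₁ ∪ (range arc ∪ range γ₂.symm)) ≤
            (δ + L' * δ) + (C * (4 * δ) + (3 * δ + L' * δ)) :=
          (diam_union' i2).trans (add_le_add b1 u1)
        refine u2.trans ?_
        have hrw : (12 + 5 * |C| + 4 * max L 0) * δ = (12 + 5 * C + 4 * L') * δ := by
          rw [hCabs, hL'eq]
        rw [hrw]
        nlinarith [mul_nonneg (le_of_lt (lt_trans zero_lt_one hC)) hδ0,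
          mul_nonneg hL'0 hδ0, hδ0]


end Construction

/-- Bounded turning (Part I of the proof of Lemma 5.3): under the same hypotheses,
any two points of Σ(Ω,φ) can be joined inside Σ(Ω,φ) by a curve of diameter at most
λ·|y₁−y₂|, with λ > 1 depending only on C, L, M, ε₀ and diam Ω. -/
theorem stmt6 : ∃ Λ : ℝ → ℝ → ℝ → ℝ → ℝ → ℝ,
    ∀ (Ω : Set E2) (φ : ℝ → ℝ) (C L M ε₀ : ℝ),
      IsJordanDomain Ω → 1 < C → 0 < ε₀ →
      (∀ ε, 0 ≤ ε → ε ≤ ε₀ →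
        IsJordanCurve (levelSet Ω ε) ∧ TwoPointCondition (levelSet Ω ε) C) →
      GaugeF φ → LipschitzOnWith (Real.toNNReal L) φ (Ici (ε₀ / 3)) →
      1 < M → (∀ t, 0 < t → t ≤ Metric.diam (frontier Ω) → M * t < φ t) →
      1 < Λ C L M ε₀ (Metric.diam Ω) ∧
      ∀ y₁ ∈ domeSurface Ω φ, ∀ y₂ ∈ domeSurface Ω φ,
        ∃ σ : Set E3, σ ⊆ domeSurface Ω φ ∧ y₁ ∈ σ ∧ y₂ ∈ σ ∧
          (∃ g : ℝ → E3, ContinuousOn g (Icc 0 1) ∧ g 0 = y₁ ∧ g 1 = y₂ ∧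
            g '' (Icc 0 1) = σ) ∧
          Metric.diam σ ≤ Λ C L M ε₀ (Metric.diam Ω) * dist y₁ y₂ := by
  refine ⟨fun c l _ _ _ => 12 + 5 * |c| + 4 * max l 0, ?_⟩
  intro Ω φ C L M ε₀ hJ hC hε₀ h2pt hφ hLip hM hMφ
  constructor
  · show (1:ℝ) < 12 + 5 * |C| + 4 * max L 0
    have h1 : (0:ℝ) ≤ |C| := abs_nonneg C
    have h2 : (0:ℝ) ≤ max L 0 := le_max_right _ _
    linarith
  intro y₁ hy₁ y₂ hy₂
  have hFne : (frontier Ω).Nonempty := by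
    obtain ⟨f, hfc, hfi, hfim⟩ := hJ.2.2.2
    have hs : (sphere (0:E2) 1).Nonempty := NormedSpace.sphere_nonempty.2 zero_le_one
    rw [← hfim]
    exact hs.image f
  obtain ⟨x₁, hx₁c, hy₁or⟩ := hy₁
  obtain ⟨x₂, hx₂c, hy₂or⟩ := hy₂
  have hrep₁ : ∃ s₁ : ℝ, (s₁ = 1 ∨ s₁ = -1) ∧
      y₁ = mk3 x₁ (s₁ * φ (infDist x₁ (frontier Ω))) := by
    rcases hy₁or with h | h
    · exact ⟨1, Or.inl rfl, by rw [h, one_mul]⟩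
    · exact ⟨-1, Or.inr rfl, by rw [h, neg_one_mul]⟩
  have hrep₂ : ∃ s₂ : ℝ, (s₂ = 1 ∨ s₂ = -1) ∧
      y₂ = mk3 x₂ (s₂ * φ (infDist x₂ (frontier Ω))) := by
    rcases hy₂or with h | h
    · exact ⟨1, Or.inl rfl, by rw [h, one_mul]⟩
    · exact ⟨-1, Or.inr rfl, by rw [h, neg_one_mul]⟩
  obtain ⟨s₁, hs₁, hy₁eq⟩ := hrep₁
  obtain ⟨s₂, hs₂, hy₂eq⟩ := hrep₂
  rcases le_total (infDist x₁ (frontier Ω)) (infDist x₂ (frontier Ω)) with hord | hord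
  · obtain ⟨γ, hsub, hdiam⟩ := core hJ hC hε₀ h2pt hφ hLip hM hMφ hFne hx₁c hx₂c hs₁ hs₂ hord
    have hdist : dist y₁ y₂ = dist (mk3 x₁ (s₁ * φ (infDist x₁ (frontier Ω))))
        (mk3 x₂ (s₂ * φ (infDist x₂ (frontier Ω)))) := by rw [hy₁eq, hy₂eq]
    refine pack (γ.cast hy₁eq hy₂eq) ?_ ?_
    · rw [range_cast]
      exact hsub
    · rw [range_cast]
      refine hdiam.trans ?_
      rw [hdist]
  · obtain ⟨γ, hsub, hdiam⟩ := core hJ hC hε₀ h2pt hφ hLip hM hMφ hFne hx₂c hx₁c hs₂ hs₁ hord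
    have hdist : dist y₁ y₂ = dist (mk3 x₂ (s₂ * φ (infDist x₂ (frontier Ω))))
        (mk3 x₁ (s₁ * φ (infDist x₁ (frontier Ω)))) := by rw [hy₁eq, hy₂eq, dist_comm]
    refine pack ((γ.cast hy₂eq hy₁eq).symm) ?_ ?_
    · rw [Path.symm_range, range_cast]
      exact hsub
    · rw [Path.symm_range, range_cast]
      refine hdiam.trans ?_
      rw [hdist]
end
end

section
/- Let Γ ⊂ ℝ² be a Jordan curve satisfying the 2-point condition with constant C > 1 (a quasicircle). Then there exists λ > 1 depending only on C such that for any point x ∈ ℝ² (not necessarily on Γ), any r > 0, and any two points y₁, y₂ ∈ Γ∖cl(B(x,r)), there exists a subarc of Γ contained in Γ∖B(x,r/λ) that contains y₁ and y₂. -/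
open Metric Set MeasureTheory

noncomputable section

open Real

def circMap (θ : ℝ) : E2 := (WithLp.equiv 2 (Fin 2 → ℝ)).symm ![Real.cos θ, Real.sin θ]

lemma circMap_apply0 (θ : ℝ) : circMap θ 0 = Real.cos θ := rfl
lemma circMap_apply1 (θ : ℝ) : circMap θ 1 = Real.sin θ := rfl

lemma circMap_mem (θ : ℝ) : circMap θ ∈ sphere (0:E2) 1 := by
  simp only [mem_sphere_iff_norm, sub_zero]
  rw [EuclideanSpace.norm_eq]
  rw [show ∑ i, ‖circMap θ i‖ ^ 2 = Real.cos θ ^ 2 + Real.sin θ ^ 2 by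
    rw [Fin.sum_univ_two]; simp [circMap_apply0, circMap_apply1, sq_abs]]
  rw [Real.cos_sq_add_sin_sq]
  exact Real.sqrt_one

lemma continuous_circMap : Continuous circMap := by
  have h : Continuous fun θ : ℝ => ![Real.cos θ, Real.sin θ] := by
    apply continuous_pi; intro i; fin_cases i
    · exact Real.continuous_cos
    · exact Real.continuous_sin
  exact (PiLp.continuous_toLp 2 _).comp h

lemma circMap_eq_iff {s t : ℝ} : circMap s = circMap t ↔ ∃ n : ℤ, s - t = n * (2 * π) := by
  constructor
  · intro h
    have hc : Real.cos s = Real.cos t := by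
      have := congrArg (fun p : E2 => p 0) h; simpa [circMap_apply0] using this
    have hs : Real.sin s = Real.sin t := by
      have := congrArg (fun p : E2 => p 1) h; simpa [circMap_apply1] using this
    have h1 : Real.cos (s - t) = 1 := by
      rw [Real.cos_sub, hc, hs, ← Real.cos_sq_add_sin_sq t]; ring
    obtain ⟨n, hn⟩ := (Real.cos_eq_one_iff _).1 h1
    exact ⟨n, hn.symm⟩
  · rintro ⟨n, hn⟩
    have hst : s = t + n * (2 * π) := by linarith
    unfold circMap
    congr 1
    rw [hst]
    have hc := Real.cos_add_int_mul_two_pi t n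
    have hs := Real.sin_add_int_mul_two_pi t n
    simp [hc, hs]

lemma E2_ext {p q : E2} (h0 : p 0 = q 0) (h1 : p 1 = q 1) : p = q := by
  ext i; fin_cases i; exacts [h0, h1]

lemma sq_add_sq_of_mem_sphere {p : E2} (hp : p ∈ sphere (0:E2) 1) :
    p 0 ^ 2 + p 1 ^ 2 = 1 := by
  simp only [mem_sphere_iff_norm, sub_zero] at hp
  rw [EuclideanSpace.norm_eq, Fin.sum_univ_two, Real.sqrt_eq_one] at hp
  simpa [sq_abs] using hp

lemma circMap_surj {p : E2} (hp : p ∈ sphere (0:E2) 1) : ∃ θ : ℝ, circMap θ = p := by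
  have h : p 0 ^ 2 + p 1 ^ 2 = 1 := sq_add_sq_of_mem_sphere hp
  have h0 : |p 0| ≤ 1 := by nlinarith [sq_abs (p 0), sq_abs (p 1), abs_nonneg (p 1)]
  have h0' : -1 ≤ p 0 := by cases abs_le.1 h0; linarith
  have h0'' : p 0 ≤ 1 := (abs_le.1 h0).2
  have hsin : Real.sin (Real.arccos (p 0)) = |p 1| := by
    rw [Real.sin_arccos]
    rw [show 1 - p 0 ^ 2 = p 1 ^ 2 by linarith]
    exact Real.sqrt_sq_eq_abs _
  by_cases hs : 0 ≤ p 1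
  · exact ⟨Real.arccos (p 0), E2_ext (by rw [circMap_apply0, Real.cos_arccos h0' h0''])
      (by rw [circMap_apply1, hsin, abs_of_nonneg hs])⟩
  · refine ⟨-Real.arccos (p 0), E2_ext ?_ ?_⟩
    · rw [circMap_apply0, Real.cos_neg, Real.cos_arccos h0' h0'']
    · rw [circMap_apply1, Real.sin_neg, hsin, abs_of_neg (lt_of_not_ge hs)]; ring

/-- Shift an angle to lie in `[α, α + 2π)` while representing the same circle point. -/
lemma circMap_shift (α θ : ℝ) : ∃ δ, 0 ≤ δ ∧ δ < 2 * π ∧ circMap (α + δ) = circMap θ := by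
  have hπ : (0:ℝ) < 2 * π := by positivity
  refine ⟨(θ - α) - ⌊(θ - α) / (2 * π)⌋ * (2 * π), ?_, ?_, ?_⟩
  · exact Int.sub_floor_div_mul_nonneg _ hπ
  · exact Int.sub_floor_div_mul_lt _ hπ
  · rw [circMap_eq_iff]
    exact ⟨-⌊(θ - α) / (2 * π)⌋, by push_cast; ring⟩

lemma int_eq_zero_of_abs_lt {n : ℤ} (h : |(n:ℝ)| * (2*π) < 2*π) : n = 0 := by
  have hπ : (0:ℝ) < 2 * π := by positivity
  have h1 : |(n:ℝ)| < 1 := by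
    by_contra hc
    push_neg at hc
    nlinarith
  have h2 := abs_lt.1 h1
  have h3 : -1 < n ∧ n < 1 := by exact_mod_cast h2
  omega

lemma circMap_injOn {u v : ℝ} (h : v - u < 2 * π) : InjOn circMap (Icc u v) := by
  intro s hs t ht hst
  obtain ⟨n, hn⟩ := circMap_eq_iff.1 hst
  have habs : |s - t| < 2 * π := by
    rw [abs_lt]; constructor <;> [linarith [hs.1, ht.2]; linarith [hs.2, ht.1]]
  rw [hn, abs_mul] at habs
  have hπ : |(2*π : ℝ)| = 2*π := abs_of_pos (by positivity)
  rw [hπ] at habs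
  have := int_eq_zero_of_abs_lt habs
  subst this
  simp at hn
  linarith

lemma image_affine_unit {u v : ℝ} (huv : u ≠ v) :
    (fun t : ℝ => u + t * (v - u)) '' Icc 0 1 = uIcc u v := by
  have hne : v - u ≠ 0 := sub_ne_zero.2 (Ne.symm huv)
  ext z
  simp only [mem_image, mem_Icc]
  constructor
  · rintro ⟨t, ⟨ht0, ht1⟩, rfl⟩
    rw [Set.mem_uIcc]
    rcases le_or_gt u v with h | h
    · left; constructor <;> nlinarith
    · right; constructor <;> nlinarith
  · intro hz
    rw [Set.mem_uIcc] at hz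
    refine ⟨(z - u) / (v - u), ?_, by field_simp; ring⟩
    rcases hz with ⟨h1, h2⟩ | ⟨h1, h2⟩
    · have hpos : 0 < v - u := lt_of_le_of_ne (by linarith) (Ne.symm hne)
      exact ⟨div_nonneg (by linarith) hpos.le, by rw [div_le_one hpos]; linarith⟩
    · have hneg : v - u < 0 := lt_of_le_of_ne (by linarith) hne
      constructor
      · rw [div_nonneg_iff]; right; exact ⟨by linarith, by linarith⟩
      · rw [div_le_one_of_neg hneg]; linarith

lemma circMap_injOn_uIcc {u v : ℝ} (h : |v - u| < 2 * π) : InjOn circMap (uIcc u v) := by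
  rw [Set.uIcc, Set.Icc]
  apply circMap_injOn
  have : u ⊔ v - u ⊓ v = |v - u| := max_sub_min_eq_abs u v
  linarith

lemma subarc_of_angles {Γ : Set E2} (f : E2 → E2) (hfc : ContinuousOn f (sphere 0 1))
    (hfi : InjOn f (sphere 0 1)) (hΓ : f '' (sphere 0 1) = Γ)
    {u v : ℝ} (huv : u ≠ v) (hlen : |v - u| < 2 * π) :
    IsSubarc Γ (f '' (circMap '' uIcc u v)) (f (circMap u)) (f (circMap v)) := by
  have hsub : circMap '' uIcc u v ⊆ sphere (0:E2) 1 := by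
    rintro _ ⟨θ, _, rfl⟩; exact circMap_mem θ
  constructor
  · rw [← hΓ]; exact fun _ ⟨a, ha, e⟩ => ⟨a, hsub ha, e⟩
  · refine ⟨fun t => f (circMap (u + t * (v - u))), ?_, ?_, ?_, ?_, ?_⟩
    · apply hfc.comp (continuous_circMap.comp (by continuity)).continuousOn
      intro t _; exact circMap_mem _
    · intro t ht t' ht' hval
      have hm : u + t * (v - u) ∈ uIcc u v := by
        rw [← image_affine_unit huv]; exact mem_image_of_mem _ ht
      have hm' : u + t' * (v - u) ∈ uIcc u v := by
        rw [← image_affine_unit huv]; exact mem_image_of_mem _ ht'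
      have h1 := hfi (circMap_mem _) (circMap_mem _) hval
      have h2 := circMap_injOn_uIcc hlen hm hm' h1
      have : v - u ≠ 0 := sub_ne_zero.2 (Ne.symm huv)
      exact mul_right_cancel₀ this (by linarith)
    · simp
    · norm_num
    · rw [show (fun t => f (circMap (u + t * (v - u)))) = f ∘ circMap ∘ (fun t : ℝ => u + t * (v - u)) from rfl]
      rw [image_comp, image_comp, image_affine_unit huv]

lemma circMap_arc_inter {α β : ℝ} (h2 : β < α + 2*π) {s t : ℝ}
    (hs : s ∈ Icc α β) (ht : t ∈ Icc β (α + 2*π)) (h : circMap s = circMap t) :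
    (s = β ∧ t = β) ∨ (s = α ∧ t = α + 2*π) := by
  obtain ⟨n, hn⟩ := circMap_eq_iff.1 h
  have hπ : (0:ℝ) < 2*π := by positivity
  have hrange : -(2*π) ≤ (n:ℝ) * (2*π) ∧ (n:ℝ) * (2*π) ≤ 0 := by
    constructor <;> [nlinarith [hs.1, ht.2]; nlinarith [hs.2, ht.1]]
  have hn1 : (-1:ℝ) ≤ (n:ℝ) := by nlinarith [hrange.1]
  have hn2 : (n:ℝ) ≤ 0 := by nlinarith [hrange.2]
  have hn1' : (-1:ℤ) ≤ n := by exact_mod_cast hn1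
  have hn2' : n ≤ 0 := by exact_mod_cast hn2
  interval_cases n
  · right
    simp only [Int.cast_neg, Int.cast_one, neg_mul, one_mul] at hn
    constructor <;> [linarith [hs.1, ht.2]; linarith [hs.1, ht.2]]
  · left
    simp at hn
    constructor <;> [linarith [hs.2, ht.1]; linarith [hs.2, ht.1]]

set_option maxHeartbeats 1000000 in
/-- Remark 5.2 (strong LLC₂ for quasicircles): for a C-quasicircle Γ there is λ > 1,
depending only on C, such that any two points of Γ outside a closed disk can be joined
by a subarc of Γ avoiding the concentric disk of radius r/λ. -/
theorem stmt14 : ∀ C : ℝ, 1 < C → ∃ lam > (1:ℝ),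
    ∀ Γ : Set E2, IsJordanCurve Γ → TwoPointCondition Γ C →
      ∀ (x : E2) (r : ℝ), 0 < r →
        ∀ y₁ ∈ Γ \ closedBall x r, ∀ y₂ ∈ Γ \ closedBall x r, y₁ ≠ y₂ →
          ∃ A, IsSubarc Γ A y₁ y₂ ∧ A ⊆ Γ \ ball x (r / lam) := by
  intro C hC
  refine ⟨2*C+2, by linarith, ?_⟩
  intro Γ hJ hTP x r hr y₁ hy₁ y₂ hy₂ hne
  set lam : ℝ := 2*C+2 with hlam
  have hlam1 : 1 < lam := by simp only [hlam]; linarith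
  have hlampos : 0 < lam := by linarith
  obtain ⟨f, hfc, hfi, hΓ⟩ := hJ
  obtain ⟨a, ha, hfa⟩ : ∃ a ∈ sphere (0:E2) 1, f a = y₁ := by
    have h := hy₁.1; rw [← hΓ] at h; exact h
  obtain ⟨b, hb, hfb⟩ : ∃ b ∈ sphere (0:E2) 1, f b = y₂ := by
    have h := hy₂.1; rw [← hΓ] at h; exact h
  obtain ⟨α, hα⟩ := circMap_surj ha
  obtain ⟨θ₀, hθ₀⟩ := circMap_surj hb
  obtain ⟨δ, hδ0, hδ2, hδeq⟩ := circMap_shift α θ₀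
  have hπ : (0:ℝ) < 2*π := by positivity
  have hbval : circMap (α + δ) = b := by rw [hδeq, hθ₀]
  have hδpos : 0 < δ := by
    rcases eq_or_lt_of_le hδ0 with h | h
    · exfalso; apply hne; rw [← hfa, ← hfb, ← hα, ← hbval, ← h, add_zero]
    · exact h
  set β := α + δ with hβdef
  have hαβ : α < β := by simp only [hβdef]; linarith
  have hβ2 : β < α + 2*π := by simp only [hβdef]; linarith
  have hper : circMap (α + 2*π) = circMap α := circMap_eq_iff.2 ⟨1, by push_cast; ring⟩
  -- the two arcs
  have harc1 := subarc_of_angles f hfc hfi hΓ (u := α) (v := β) hαβ.ne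
    (by rw [abs_of_pos (by linarith)]; linarith)
  have harc2 := subarc_of_angles f hfc hfi hΓ (u := α + 2*π) (v := β) (by linarith)
    (by rw [abs_of_neg (by linarith)]; linarith)
  rw [uIcc_of_le hαβ.le, hα, hbval, hfa, hfb] at harc1
  rw [uIcc_of_ge hβ2.le, hper, hα, hbval, hfa, hfb] at harc2
  set A₁ : Set E2 := f '' (circMap '' Icc α β) with hA₁def
  set A₂ : Set E2 := f '' (circMap '' Icc β (α + 2*π)) with hA₂def
  have hA₁Γ : A₁ ⊆ Γ := harc1.1
  have hA₂Γ : A₂ ⊆ Γ := harc2.1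
  by_cases hc1 : ∀ z ∈ A₁, z ∉ ball x (r/lam)
  · exact ⟨A₁, harc1, fun z hz => ⟨hA₁Γ hz, hc1 z hz⟩⟩
  by_cases hc2 : ∀ z ∈ A₂, z ∉ ball x (r/lam)
  · exact ⟨A₂, harc2, fun z hz => ⟨hA₂Γ hz, hc2 z hz⟩⟩
  exfalso
  push_neg at hc1 hc2
  obtain ⟨p₁, hp₁A, hp₁b⟩ := hc1
  obtain ⟨p₂, hp₂A, hp₂b⟩ := hc2
  obtain ⟨q₁, hq₁, hq₁p⟩ := hp₁A
  obtain ⟨s, hs, rfl⟩ := hq₁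
  obtain ⟨q₂, hq₂, hq₂p⟩ := hp₂A
  obtain ⟨t, ht, rfl⟩ := hq₂
  subst hq₁p hq₂p
  rw [mem_ball] at hp₁b hp₂b
  have hrlam : r/lam < r := div_lt_self hr hlam1
  have hd₁ : r < dist y₁ x := by
    have := hy₁.2; rwa [mem_closedBall, not_le] at this
  have hd₂ : r < dist y₂ x := by
    have := hy₂.2; rwa [mem_closedBall, not_le] at this
  have hp₁y₁ : f (circMap s) ≠ y₁ := by
    intro h; rw [h] at hp₁b; linarith
  have hp₁y₂ : f (circMap s) ≠ y₂ := by
    intro h; rw [h] at hp₁b; linarith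
  have hp₂y₁ : f (circMap t) ≠ y₁ := by
    intro h; rw [h] at hp₂b; linarith
  have hp₂y₂ : f (circMap t) ≠ y₂ := by
    intro h; rw [h] at hp₂b; linarith
  -- intersection of the two arcs is contained in {y₁, y₂}
  have hinter : ∀ s' ∈ Icc α β, ∀ t' ∈ Icc β (α + 2*π),
      f (circMap s') = f (circMap t') → f (circMap s') = y₂ ∨ f (circMap s') = y₁ := by
    intro s' hs' t' ht' h
    have hcm := hfi (circMap_mem _) (circMap_mem _) h
    rcases circMap_arc_inter hβ2 hs' ht' hcm with ⟨h1, _⟩ | ⟨h1, _⟩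
    · left; rw [h1, hbval, hfb]
    · right; rw [h1, hα, hfa]
  have hp₁p₂ : f (circMap s) ≠ f (circMap t) := by
    intro h
    rcases hinter s hs t ht h with h' | h'
    · exact hp₁y₂ h'
    · exact hp₁y₁ h'
  -- two-point condition
  obtain ⟨B, ⟨hBΓ, g, hgc, hgi, hg0, hg1, hgim⟩, hdiam⟩ :=
    hTP _ (hA₁Γ ⟨_, ⟨s, hs, rfl⟩, rfl⟩) _ (hA₂Γ ⟨_, ⟨t, ht, rfl⟩, rfl⟩) hp₁p₂
  have hBcomp : IsCompact B := hgim ▸ (isCompact_Icc.image_of_continuousOn hgc)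
  have hBconn : IsConnected B := hgim ▸ ((isConnected_Icc (by norm_num : (0:ℝ) ≤ 1)).image g hgc)
  have hp₁B : f (circMap s) ∈ B := by rw [← hgim, ← hg0]; exact ⟨0, by norm_num, rfl⟩
  have hp₂B : f (circMap t) ∈ B := by rw [← hgim, ← hg1]; exact ⟨1, by norm_num, rfl⟩
  -- the arcs are compact
  have hScomp : ∀ u v : ℝ, IsCompact (f '' (circMap '' Icc u v)) := by
    intro u v
    apply IsCompact.image_of_continuousOn
    · exact (isCompact_Icc.image continuous_circMap)
    · apply hfc.mono
      rintro _ ⟨θ, _, rfl⟩; exact circMap_mem θ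
  -- Γ is covered by the two arcs
  have hcover : Γ ⊆ A₁ ∪ A₂ := by
    intro z hz
    rw [← hΓ] at hz
    obtain ⟨p, hp, rfl⟩ := hz
    obtain ⟨θ, hθ⟩ := circMap_surj hp
    obtain ⟨δ', hδ'0, hδ'2, hδ'eq⟩ := circMap_shift α θ
    rw [hθ] at hδ'eq
    rcases le_or_gt δ' δ with h | h
    · left; exact ⟨circMap (α + δ'), ⟨α + δ', ⟨by linarith, by simp only [hβdef]; linarith⟩, rfl⟩,
        by rw [hδ'eq]⟩
    · right; exact ⟨circMap (α + δ'), ⟨α + δ', ⟨by simp only [hβdef]; linarith, by linarith⟩, rfl⟩,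
        by rw [hδ'eq]⟩
  -- B must contain y₁ or y₂
  have hkey : y₁ ∈ B ∨ y₂ ∈ B := by
    by_contra hk
    push_neg at hk
    have hp₂nA₁ : f (circMap t) ∉ A₁ := by
      rintro ⟨_, ⟨s', hs', rfl⟩, h⟩
      rcases hinter s' hs' t ht h with h' | h'
      · exact hp₂y₂ (h ▸ h')
      · exact hp₂y₁ (h ▸ h')
    have hp₁nA₂ : f (circMap s) ∉ A₂ := by
      rintro ⟨_, ⟨t', ht', rfl⟩, h⟩
      rcases hinter s hs t' ht' h.symm with h' | h'
      · exact hp₁y₂ h'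
      · exact hp₁y₁ h'
    have hBcover : B ⊆ A₁ᶜ ∪ A₂ᶜ := by
      intro z hz
      by_contra hzc
      simp only [mem_union, mem_compl_iff, not_or, not_not] at hzc
      obtain ⟨_, ⟨s', hs', rfl⟩, hq1⟩ := hzc.1
      obtain ⟨_, ⟨t', ht', rfl⟩, hq2⟩ := hzc.2
      rcases hinter s' hs' t' ht' (hq1.trans hq2.symm) with h' | h'
      · exact hk.2 (h' ▸ hq1 ▸ hz)
      · exact hk.1 (h' ▸ hq1 ▸ hz)
    obtain ⟨z, hzB, hz1, hz2⟩ := hBconn.isPreconnected A₁ᶜ A₂ᶜ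
      (hScomp α β).isClosed.isOpen_compl (hScomp β (α+2*π)).isClosed.isOpen_compl
      hBcover ⟨_, hp₂B, hp₂nA₁⟩ ⟨_, hp₁B, hp₁nA₂⟩
    rcases hcover (hBΓ hzB) with h | h
    · exact hz1 h
    · exact hz2 h
  -- numerical contradiction
  have hBbdd := hBcomp.isBounded
  have hdp : dist (f (circMap s)) (f (circMap t)) < 2 * (r/lam) := by
    calc dist (f (circMap s)) (f (circMap t))
        ≤ dist (f (circMap s)) x + dist x (f (circMap t)) := dist_triangle _ _ _
      _ < r/lam + r/lam := by rw [dist_comm x]; exact add_lt_add hp₁b hp₂b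
      _ = 2 * (r/lam) := by ring
  have hdiam2 : Metric.diam B < C * (2 * (r/lam)) :=
    lt_of_le_of_lt hdiam (by apply mul_lt_mul_of_pos_left hdp (by linarith))
  have hu : r/lam * lam = r := div_mul_cancel₀ r (by linarith)
  rcases hkey with hyB | hyB
  · have h1 : dist y₁ (f (circMap s)) ≤ Metric.diam B := dist_le_diam_of_mem hBbdd hyB hp₁B
    have h2 : dist y₁ x ≤ dist y₁ (f (circMap s)) + dist (f (circMap s)) x := dist_triangle _ _ _
    nlinarith [hu]
  · have h1 : dist y₂ (f (circMap s)) ≤ Metric.diam B := dist_le_diam_of_mem hBbdd hyB hp₁B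
    have h2 : dist y₂ x ≤ dist y₂ (f (circMap s)) + dist (f (circMap s)) x := dist_triangle _ _ _
    nlinarith [hu]
end
end

section
/- Let Ω be any planar Jordan domain and let φ : [0,∞) → [0,∞) be a homeomorphism with φ(0) = 0 and liminf_{t→0} φ(t)/t = 0. Then the surface Σ(Ω,φ) is not λ-linearly locally connected for any λ ≥ 1; in particular Σ(Ω, t^α) is not linearly locally connected for any α > 1. -/
open Metric Set MeasureTheory

noncomputable section

lemma mk3_two (x : E2) (z : ℝ) : (mk3 x z) 2 = z := by simp [mk3]
lemma dist_mk3_same (x : E2) (a b : ℝ) : dist (mk3 x a) (mk3 x b) = |a - b| := by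
  rw [EuclideanSpace.dist_eq]
  simp [mk3, Fin.sum_univ_three, Real.dist_eq, Real.sqrt_sq_eq_abs]
lemma dist_le_dist_mk3 (x y : E2) (a b : ℝ) : dist x y ≤ dist (mk3 x a) (mk3 y b) := by
  rw [EuclideanSpace.dist_eq, EuclideanSpace.dist_eq]
  apply Real.sqrt_le_sqrt
  simp only [mk3, WithLp.equiv_symm_apply, WithLp.ofLp_toLp, Fin.sum_univ_three, Fin.sum_univ_two,
    Matrix.cons_val_zero, Matrix.cons_val_one, Matrix.head_cons]
  nlinarith [sq_nonneg (dist (mk3 x a 2) (mk3 y b 2)), dist_nonneg (x := mk3 x a 2) (y := mk3 y b 2), sq_nonneg (dist a b)]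

lemma aux_notLLC (Ω : Set E2) (hΩ : IsJordanDomain Ω) (φ : ℝ → ℝ)
    (hzero : ∀ s, 0 ≤ s → φ s = 0 → s = 0)
    (lam : ℝ) (hlam : 1 ≤ lam)
    (hchoice : ∀ d₀ > (0:ℝ), ∃ d, 0 < d ∧ d < d₀ ∧ 0 < φ d ∧ 3 * lam * φ d < d) :
    ¬ LLCWith (domeSurface Ω φ) lam := by
  obtain ⟨hopen, hconn, hbdd, -⟩ := hΩ
  set F := frontier Ω with hF
  -- F is nonempty
  have hFne : F.Nonempty := by
    rcases eq_empty_or_nonempty F with h | h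
    · exfalso
      have hcl : IsClopen Ω := isClopen_iff_frontier_eq_empty.mpr h
      rcases isClopen_iff.mp hcl with h' | h'
      · exact hconn.nonempty.ne_empty h'
      · exact NormedSpace.unbounded_univ ℝ E2 (h' ▸ hbdd)
    · exact h
  have hFcl : IsClosed F := isClosed_frontier
  obtain ⟨p₀, hp₀⟩ := hconn.nonempty
  have hd₀ : 0 < infDist p₀ F := by
    rw [← (hFcl.notMem_iff_infDist_pos hFne)]
    exact fun hmem => (disjoint_frontier_iff_isOpen.mpr hopen).le_bot ⟨hmem, hp₀⟩
  obtain ⟨d, hd0, hdlt, hφd, hmain⟩ := hchoice _ hd₀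
  -- find p ∈ closure Ω with infDist p F = d
  have hconncl : IsConnected (closure Ω) := hconn.closure
  have himg : IsPreconnected ((fun x => infDist x F) '' closure Ω) :=
    (hconncl.image _ (continuous_infDist_pt F).continuousOn).isPreconnected
  obtain ⟨w₀, hw₀⟩ := id hFne
  have h0mem : (0:ℝ) ∈ (fun x => infDist x F) '' closure Ω :=
    ⟨w₀, (hF ▸ frontier_subset_closure) hw₀, infDist_zero_of_mem hw₀⟩
  have hd₀mem : infDist p₀ F ∈ (fun x => infDist x F) '' closure Ω :=
    ⟨p₀, subset_closure hp₀, rfl⟩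
  have hdmem : d ∈ (fun x => infDist x F) '' closure Ω := by
    apply himg.Icc_subset h0mem hd₀mem
    exact ⟨hd0.le, hdlt.le⟩
  obtain ⟨p, hpcl, hpd0⟩ := hdmem
  have hpd : infDist p (frontier Ω) = d := hpd0
  -- the two points
  set y₁ := mk3 p (φ d) with hy₁
  set y₂ := mk3 p (-(φ d)) with hy₂
  have hy₁S : y₁ ∈ domeSurface Ω φ := ⟨p, hpcl, Or.inl (by rw [hy₁, hpd])⟩
  have hy₂S : y₂ ∈ domeSurface Ω φ := ⟨p, hpcl, Or.inr (by rw [hy₂, hpd])⟩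
  rintro ⟨h1, -⟩
  have hdist12 : dist y₁ y₂ = 2 * φ d := by
    rw [hy₁, hy₂, dist_mk3_same]
    rw [abs_of_pos (by linarith)]; ring
  obtain ⟨E, hEsub, -, hEconn, hy₁E, hy₂E⟩ :=
    h1 y₁ hy₁S (3 * φ d) (by linarith) y₁ ⟨mem_ball_self (by linarith), hy₁S⟩
      y₂ ⟨by rw [mem_ball, dist_comm, hdist12]; linarith, hy₂S⟩
  -- intermediate value on third coordinate
  have hEimg : IsPreconnected ((fun v : E3 => v 2) '' E) :=
    (hEconn.image _ (by fun_prop : Continuous fun v : E3 => v 2).continuousOn).isPreconnected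
  have hmem₂ : -(φ d) ∈ (fun v : E3 => v 2) '' E := ⟨y₂, hy₂E, by simp [hy₂, mk3_two]⟩
  have hmem₁ : φ d ∈ (fun v : E3 => v 2) '' E := ⟨y₁, hy₁E, by simp [hy₁, mk3_two]⟩
  have h0img : (0:ℝ) ∈ (fun v : E3 => v 2) '' E :=
    hEimg.Icc_subset hmem₂ hmem₁ ⟨by linarith, hφd.le⟩
  obtain ⟨q, hqE, hq2⟩ := h0img
  obtain ⟨hqball, w, hwcl, hw⟩ := hEsub hqE
  -- q's planar point is on the frontier
  have hφw : φ (infDist w F) = 0 := by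
    simp only at hq2
    rcases hw with h | h
    · rw [h] at hq2; rw [mk3_two] at hq2; exact hq2
    · rw [h] at hq2; rw [mk3_two] at hq2; linarith
  have hwF : w ∈ F := by
    have := hzero _ infDist_nonneg hφw
    exact (hFcl.mem_iff_infDist_zero hFne).mpr this
  -- distance contradiction
  have hlow : d ≤ dist q y₁ := by
    have h1' : dist w p ≤ dist q y₁ := by
      rcases hw with h | h <;> rw [h, hy₁] <;> exact dist_le_dist_mk3 _ _ _ _
    have h2' : d ≤ dist w p := by
      rw [← hpd, dist_comm]; exact infDist_le_dist_of_mem hwF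
    linarith
  rw [mem_ball] at hqball
  have : lam * (3 * φ d) = 3 * lam * φ d := by ring
  rw [this] at hqball
  linarith


/-- If liminf_{t→0} φ(t)/t = 0, then Σ(Ω,φ) is not λ-LLC for any λ ≥ 1; in particular
Σ(Ω,t^α) is not LLC for α > 1. -/
theorem stmt18 (Ω : Set E2) (hΩ : IsJordanDomain Ω) (φ : ℝ → ℝ)
    (hcont : ContinuousOn φ (Ici 0)) (hmono : StrictMonoOn φ (Ici 0))
    (hsurj : SurjOn φ (Ici 0) (Ici 0)) (h0 : φ 0 = 0)
    (hliminf : ∀ m > (0:ℝ), ∃ᶠ t in nhdsWithin 0 (Ioi 0), φ t < m * t) :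
    (∀ lam : ℝ, 1 ≤ lam → ¬ LLCWith (domeSurface Ω φ) lam) ∧
    (∀ α : ℝ, 1 < α → ∀ lam : ℝ, 1 ≤ lam →
      ¬ LLCWith (domeSurface Ω (fun t => t ^ α)) lam) := by
  constructor
  · intro lam hlam
    apply aux_notLLC Ω hΩ φ _ lam hlam
    · -- hchoice
      intro d₀ hd₀
      have hlam0 : (0:ℝ) < lam := lt_of_lt_of_le one_pos hlam
      have hm : (0:ℝ) < (6 * lam)⁻¹ := by positivity
      have hfreq := (hliminf _ hm).and_eventually
        (Ioo_mem_nhdsGT_of_mem (by constructor <;> simp [hd₀] : (0:ℝ) ∈ Ico (0:ℝ) d₀))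
      obtain ⟨t, hφt, ht0, htd⟩ := hfreq.exists
      refine ⟨t, ht0, htd, ?_, ?_⟩
      · have := hmono (self_mem_Ici) (le_of_lt ht0 : t ∈ Ici 0) ht0
        rw [h0] at this; exact this
      · have h6 : (6:ℝ) * lam > 0 := by positivity
        have : φ t < (6 * lam)⁻¹ * t := hφt
        calc 3 * lam * φ t < 3 * lam * ((6 * lam)⁻¹ * t) := by
              apply mul_lt_mul_of_pos_left this (by positivity)
          _ = t / 2 := by field_simp; ring
          _ < t := by linarith
    · -- hzero
      intro s hs hφs
      by_contra hne
      have hspos : 0 < s := lt_of_le_of_ne hs (Ne.symm hne)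
      have := hmono (self_mem_Ici) (le_of_lt hspos : s ∈ Ici 0) hspos
      rw [h0, hφs] at this; exact lt_irrefl 0 this
  · intro α hα lam hlam
    apply aux_notLLC Ω hΩ _ _ lam hlam
    · -- hchoice
      intro d₀ hd₀
      have hlam0 : (0:ℝ) < lam := lt_of_lt_of_le one_pos hlam
      have hm : (0:ℝ) < (6 * lam)⁻¹ := by positivity
      have hα1 : (0:ℝ) < α - 1 := by linarith
      have hct : ContinuousAt (fun x : ℝ => x ^ (α - 1)) 0 :=
        Real.continuousAt_rpow_const 0 (α - 1) (Or.inr hα1.le)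
      have h00 : (0:ℝ) ^ (α - 1) = 0 := Real.zero_rpow (ne_of_gt hα1)
      have htend : Filter.Tendsto (fun x : ℝ => x ^ (α - 1)) (nhdsWithin 0 (Ioi 0)) (nhds 0) := by
        have := hct.tendsto
        rw [h00] at this
        exact this.mono_left nhdsWithin_le_nhds
      have hev : ∀ᶠ t in nhdsWithin 0 (Ioi 0), (fun x : ℝ => x ^ (α - 1)) t < (6 * lam)⁻¹ :=
        htend.eventually (eventually_lt_nhds hm)
      have hfreq := (hev.and
        (Ioo_mem_nhdsGT_of_mem (by constructor <;> simp [hd₀] : (0:ℝ) ∈ Ico (0:ℝ) d₀))).exists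
      obtain ⟨t, hφt, ht0, htd⟩ := hfreq
      refine ⟨t, ht0, htd, Real.rpow_pos_of_pos ht0 α, ?_⟩
      have hsplit : t ^ α = t ^ (α - 1) * t := by
        calc t ^ α = t ^ (α - 1 + 1) := by norm_num
          _ = t ^ (α - 1) * t ^ (1:ℝ) := Real.rpow_add ht0 _ _
          _ = t ^ (α - 1) * t := by rw [Real.rpow_one]
      rw [hsplit]
      have h6 : (6:ℝ) * lam > 0 := by positivity
      calc 3 * lam * (t ^ (α - 1) * t) < 3 * lam * ((6 * lam)⁻¹ * t) := by
            apply mul_lt_mul_of_pos_left _ (by positivity)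
            exact mul_lt_mul_of_pos_right hφt ht0
        _ = t / 2 := by field_simp; ring
        _ < t := by linarith
    · -- hzero
      intro s hs hφs
      by_contra hne
      have hspos : 0 < s := lt_of_le_of_ne hs (Ne.symm hne)
      have := Real.rpow_pos_of_pos hspos α
      rw [hφs] at this; exact lt_irrefl 0 this
end
end
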